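/- The omitted-variable bias satisfies the exact identity E[μ_s·α_s] − E[μ·α] = −E[(μ − μ_s)(α − α_s)], and hence the sharp bound |E[μ_s·α_s] − E[μ·α]| ≤ √(E[(μ − μ_s)²])·√(E[(α − α_s)²]) = S·C_Y·C_D, where E[(α − α_s)²] = E[α²] − E[α_s²] because α_s is the L² projection of α onto 𝒢-measurable functions. -/

import Mathlib

open MeasureTheory
open scoped RealInnerProductSpace

private lemma integrable_mul_of_memL2 {Ω : Type*} {mF : MeasurableSpace Ω} {P : Measure Ω}
    [IsProbabilityMeasure P] {f g : Ω → ℝ} (hf : MemLp f 2 P) (hg : MemLp g 2 P) :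
    Integrable (fun ω => f ω * g ω) P := by
  have h : MemLp (f • g) 1 P := hg.smul hf
  rw [memLp_one_iff_integrable] at h
  exact h

private lemma memL2_condexp {Ω : Type*} {m mF : MeasurableSpace Ω} {P : Measure Ω}
    [IsProbabilityMeasure P] (hm : m ≤ mF) {f : Ω → ℝ}
    (hf : MemLp f 2 P) : MemLp (P[f|m]) 2 P := by
  have hfi : Integrable f P := hf.integrable one_le_two
  set F := hf.toLp f with hF
  set g : Lp ℝ 2 P := (condExpL2 ℝ ℝ hm F : Lp ℝ 2 P) with hg
  have hgmeas : AEStronglyMeasurable[m] (g : Ω → ℝ) P := aestronglyMeasurable_condExpL2 hm F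
  have heq : (g : Ω → ℝ) =ᵐ[P] P[f|m] := by
    refine ae_eq_condExp_of_forall_setIntegral_eq hm hfi ?_ ?_ hgmeas
    · intro s _ _
      exact ((Lp.memLp g).integrable one_le_two).integrableOn
    · intro s hs hμs
      rw [integral_condExpL2_eq hm F hs hμs.ne]
      exact setIntegral_congr_ae (hm s hs) ((hf.coeFn_toLp).mono fun x hx _ => hx)
  exact (Lp.memLp g).ae_eq heq

private lemma int_mul_condexp {Ω : Type*} {m mF : MeasurableSpace Ω} {P : Measure Ω}
    [IsProbabilityMeasure P] (hm : m ≤ mF) {f g : Ω → ℝ}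
    (hf : MemLp f 2 P) (hg : MemLp g 2 P) (hgm : StronglyMeasurable[m] g) :
    ∫ ω, g ω * f ω ∂P = ∫ ω, g ω * (P[f|m]) ω ∂P := by
  have hfi : Integrable f P := hf.integrable one_le_two
  have hfg : Integrable (g * f) P := by
    exact integrable_mul_of_memL2 hg hf
  have h1 : ∫ ω, (P[g * f|m]) ω ∂P = ∫ ω, (g * f) ω ∂P := integral_condExp hm
  have h2 : P[g * f|m] =ᵐ[P] g * P[f|m] := condExp_mul_of_stronglyMeasurable_left hgm hfg hfi
  calc ∫ ω, g ω * f ω ∂P = ∫ ω, (g * f) ω ∂P := by simp [Pi.mul_apply]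
    _ = ∫ ω, (P[g * f|m]) ω ∂P := h1.symm
    _ = ∫ ω, (g * P[f|m]) ω ∂P := integral_congr_ae h2
    _ = ∫ ω, g ω * (P[f|m]) ω ∂P := by simp [Pi.mul_apply]

private lemma abs_int_mul_le {Ω : Type*} {mF : MeasurableSpace Ω} {P : Measure Ω}
    [IsProbabilityMeasure P] {f g : Ω → ℝ} (hf : MemLp f 2 P) (hg : MemLp g 2 P) :
    |∫ ω, f ω * g ω ∂P| ≤ Real.sqrt (∫ ω, f ω ^ 2 ∂P) * Real.sqrt (∫ ω, g ω ^ 2 ∂P) := by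
  set F := hf.toLp f with hF
  set G := hg.toLp g with hG
  have hFf : (F : Ω → ℝ) =ᵐ[P] f := hf.coeFn_toLp
  have hGg : (G : Ω → ℝ) =ᵐ[P] g := hg.coeFn_toLp
  have hinner : ∫ ω, f ω * g ω ∂P = ⟪F, G⟫ := by
    rw [L2.inner_def]
    refine integral_congr_ae ?_
    filter_upwards [hFf, hGg] with ω h1 h2
    simp [h1, h2, RCLike.inner_apply, mul_comm]
  have hnF : ‖F‖ = Real.sqrt (∫ ω, f ω ^ 2 ∂P) := by
    have h : ⟪F, F⟫ = ∫ ω, f ω ^ 2 ∂P := by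
      rw [L2.inner_def]
      refine integral_congr_ae ?_
      filter_upwards [hFf] with ω h1
      simp [h1, RCLike.inner_apply, sq]
    rw [← h, real_inner_self_eq_norm_sq, Real.sqrt_sq (norm_nonneg _)]
  have hnG : ‖G‖ = Real.sqrt (∫ ω, g ω ^ 2 ∂P) := by
    have h : ⟪G, G⟫ = ∫ ω, g ω ^ 2 ∂P := by
      rw [L2.inner_def]
      refine integral_congr_ae ?_
      filter_upwards [hGg] with ω h1
      simp [h1, RCLike.inner_apply, sq]
    rw [← h, real_inner_self_eq_norm_sq, Real.sqrt_sq (norm_nonneg _)]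
  rw [hinner, ← hnF, ← hnG]
  exact abs_real_inner_le_norm F G

theorem omitted_variable_bias_identity_and_bound
    {Ω : Type*} {mF : MeasurableSpace Ω} (P : Measure Ω) [IsProbabilityMeasure P]
    (mG mH : MeasurableSpace Ω) (hGH : mG ≤ mH) (hHF : mH ≤ mF)
    (Y α : Ω → ℝ) (hY : MemLp Y 2 P) (hα : MemLp α 2 P)
    (hσ : 0 < ∫ ω, (Y ω - (P[Y | mG]) ω) ^ 2 ∂P)
    (hν : 0 < ∫ ω, ((P[α | mG]) ω) ^ 2 ∂P) :
    ((∫ ω, (P[Y | mG]) ω * (P[α | mG]) ω ∂P)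
        - (∫ ω, (P[Y | mH]) ω * α ω ∂P)
      = -∫ ω, ((P[Y | mH]) ω - (P[Y | mG]) ω) * (α ω - (P[α | mG]) ω) ∂P)
    ∧ (|(∫ ω, (P[Y | mG]) ω * (P[α | mG]) ω ∂P)
          - (∫ ω, (P[Y | mH]) ω * α ω ∂P)|
        ≤ Real.sqrt (∫ ω, ((P[Y | mH]) ω - (P[Y | mG]) ω) ^ 2 ∂P)
          * Real.sqrt (∫ ω, (α ω - (P[α | mG]) ω) ^ 2 ∂P))
    ∧ (Real.sqrt (∫ ω, ((P[Y | mH]) ω - (P[Y | mG]) ω) ^ 2 ∂P)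
          * Real.sqrt (∫ ω, (α ω - (P[α | mG]) ω) ^ 2 ∂P)
        = (Real.sqrt (∫ ω, (Y ω - (P[Y | mG]) ω) ^ 2 ∂P)
            * Real.sqrt (∫ ω, ((P[α | mG]) ω) ^ 2 ∂P))
          * (Real.sqrt (∫ ω, ((P[Y | mH]) ω - (P[Y | mG]) ω) ^ 2 ∂P)
              / Real.sqrt (∫ ω, (Y ω - (P[Y | mG]) ω) ^ 2 ∂P))
          * (Real.sqrt ((∫ ω, α ω ^ 2 ∂P) - ∫ ω, ((P[α | mG]) ω) ^ 2 ∂P)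
              / Real.sqrt (∫ ω, ((P[α | mG]) ω) ^ 2 ∂P)))
    ∧ ((∫ ω, (α ω - (P[α | mG]) ω) ^ 2 ∂P)
        = (∫ ω, α ω ^ 2 ∂P) - ∫ ω, ((P[α | mG]) ω) ^ 2 ∂P) := by
  have hGF : mG ≤ mF := hGH.trans hHF
  set μH := P[Y | mH] with hμHdef
  set μG := P[Y | mG] with hμGdef
  set αG := P[α | mG] with hαGdef
  have hμH : MemLp μH 2 P := memL2_condexp hHF hY
  have hμG : MemLp μG 2 P := memL2_condexp hGF hY
  have hαG : MemLp αG 2 P := memL2_condexp hGF hα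
  have hμGm : StronglyMeasurable[mG] μG := stronglyMeasurable_condExp
  have hαGm : StronglyMeasurable[mG] αG := stronglyMeasurable_condExp
  -- tower
  have htower : P[μH | mG] =ᵐ[P] μG := condExp_condExp_of_le hGH hHF
  -- cross term facts
  have fact1 : ∫ ω, αG ω * α ω ∂P = ∫ ω, αG ω * αG ω ∂P :=
    int_mul_condexp hGF hα hαG hαGm
  have fact2 : ∫ ω, μG ω * α ω ∂P = ∫ ω, μG ω * αG ω ∂P :=
    int_mul_condexp hGF hα hμG hμGm
  have fact3 : ∫ ω, αG ω * μH ω ∂P = ∫ ω, αG ω * μG ω ∂P := by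
    rw [int_mul_condexp hGF hμH hαG hαGm]
    refine integral_congr_ae ?_
    filter_upwards [htower] with ω h
    rw [h]
  -- integrability of all products
  have iμHα : Integrable (fun ω => μH ω * α ω) P := integrable_mul_of_memL2 hμH hα
  have iμHαG : Integrable (fun ω => μH ω * αG ω) P := integrable_mul_of_memL2 hμH hαG
  have iμGα : Integrable (fun ω => μG ω * α ω) P := integrable_mul_of_memL2 hμG hα
  have iμGαG : Integrable (fun ω => μG ω * αG ω) P := integrable_mul_of_memL2 hμG hαG
  have iαα : Integrable (fun ω => α ω * α ω) P := integrable_mul_of_memL2 hα hα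
  have iααG : Integrable (fun ω => αG ω * α ω) P := integrable_mul_of_memL2 hαG hα
  have iαGαG : Integrable (fun ω => αG ω * αG ω) P := integrable_mul_of_memL2 hαG hαG
  -- Part 1: the identity
  have part1 : (∫ ω, μG ω * αG ω ∂P) - (∫ ω, μH ω * α ω ∂P)
      = -∫ ω, (μH ω - μG ω) * (α ω - αG ω) ∂P := by
    have hexp : ∫ ω, (μH ω - μG ω) * (α ω - αG ω) ∂P
        = (∫ ω, μH ω * α ω ∂P) - (∫ ω, μH ω * αG ω ∂P)
          - ((∫ ω, μG ω * α ω ∂P) - (∫ ω, μG ω * αG ω ∂P)) := by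
      rw [show (∫ ω, (μH ω - μG ω) * (α ω - αG ω) ∂P)
          = ∫ ω, (μH ω * α ω - μH ω * αG ω) - (μG ω * α ω - μG ω * αG ω) ∂P from
        integral_congr_ae (Filter.Eventually.of_forall fun ω => by ring),
        integral_sub (f := fun ω => μH ω * α ω - μH ω * αG ω)
          (g := fun ω => μG ω * α ω - μG ω * αG ω) (by exact iμHα.sub iμHαG) (by exact iμGα.sub iμGαG),
        integral_sub iμHα iμHαG, integral_sub iμGα iμGαG]
    have h3 : ∫ ω, μH ω * αG ω ∂P = ∫ ω, μG ω * αG ω ∂P := by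
      rw [show (∫ ω, μH ω * αG ω ∂P) = ∫ ω, αG ω * μH ω ∂P from
          integral_congr_ae (Filter.Eventually.of_forall fun ω => mul_comm _ _), fact3]
      exact integral_congr_ae (Filter.Eventually.of_forall fun ω => mul_comm _ _)
    rw [hexp, h3, fact2]
    ring
  -- Part 4: Pythagoras
  have part4 : (∫ ω, (α ω - αG ω) ^ 2 ∂P)
      = (∫ ω, α ω ^ 2 ∂P) - ∫ ω, αG ω ^ 2 ∂P := by
    have hcross : ∫ ω, αG ω * α ω ∂P = ∫ ω, αG ω ^ 2 ∂P := by
      rw [fact1]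
      exact integral_congr_ae (Filter.Eventually.of_forall fun ω => (sq (αG ω)).symm)
    have hexp : ∫ ω, (α ω - αG ω) ^ 2 ∂P
        = (∫ ω, α ω * α ω ∂P) - (∫ ω, αG ω * α ω ∂P)
          - ((∫ ω, αG ω * α ω ∂P) - (∫ ω, αG ω * αG ω ∂P)) := by
      rw [show (∫ ω, (α ω - αG ω) ^ 2 ∂P)
          = ∫ ω, (α ω * α ω - αG ω * α ω) - (αG ω * α ω - αG ω * αG ω) ∂P from
        integral_congr_ae (Filter.Eventually.of_forall fun ω => by ring),
        integral_sub (f := fun ω => α ω * α ω - αG ω * α ω)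
          (g := fun ω => αG ω * α ω - αG ω * αG ω) (by exact iαα.sub iααG) (by exact iααG.sub iαGαG),
        integral_sub iαα iααG, integral_sub iααG iαGαG]
    rw [hexp, hcross]
    have h1 : ∫ ω, α ω * α ω ∂P = ∫ ω, α ω ^ 2 ∂P :=
      integral_congr_ae (Filter.Eventually.of_forall fun ω => (sq (α ω)).symm)
    have h2 : ∫ ω, αG ω * αG ω ∂P = ∫ ω, αG ω ^ 2 ∂P :=
      integral_congr_ae (Filter.Eventually.of_forall fun ω => (sq (αG ω)).symm)
    rw [h1, h2]
    ring
  -- Part 2: Cauchy–Schwarz bound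
  have part2 : |(∫ ω, μG ω * αG ω ∂P) - (∫ ω, μH ω * α ω ∂P)|
      ≤ Real.sqrt (∫ ω, (μH ω - μG ω) ^ 2 ∂P)
        * Real.sqrt (∫ ω, (α ω - αG ω) ^ 2 ∂P) := by
    rw [part1, abs_neg]
    exact abs_int_mul_le (hμH.sub hμG) (hα.sub hαG)
  refine ⟨part1, part2, ?_, part4⟩
  -- Part 3: algebra with the scale decomposition
  rw [← part4]
  have hσ' : Real.sqrt (∫ ω, (Y ω - μG ω) ^ 2 ∂P) ≠ 0 :=
    (Real.sqrt_pos.mpr hσ).ne'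
  have hν' : Real.sqrt (∫ ω, αG ω ^ 2 ∂P) ≠ 0 :=
    (Real.sqrt_pos.mpr hν).ne'
  field_simp
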